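/- arXiv:1303.2721 — 3 statements merged into one kernel-verified Lean document; each statement's English description precedes it below -/
import Mathlib

section
/- Fix e⁰ ∈ ℝ^{Nn}, a gain K ∈ ℝ^{p×n}, and a constant c > 0, and let ε⁰ = (T^{-1}⊗I_n) e⁰ with blocks ε⁰_i ∈ ℝⁿ. Suppose that for every collection of locally square-integrable inputs ξ_i : [0,∞) → ℝⁿ and η_i : [0,∞) → ℝ^{(N−1)n} (i = 1,…,N) for which there exist a sequence t_l → ∞ and d > 0 with ∫₀^{t_l}‖ξ_i(t)‖² dt ≤ ∫₀^{t_l}‖ε_i(t)‖² dt + d and ∫₀^{t_l}‖η_i(t)‖² dt ≤ ∫₀^{t_l}∑_{j≠i}‖ε_j(t)‖² dt + (N−1)d for all i and l, every solution of the interconnected system ε̇_i = A ε_i + λ_i B₁ K ε_i + E_i ξ_i + L_i η_i with ε_i(0) = ε⁰_i satisfies Ĵ = ∑_{i=1}^N ∫₀^∞ (λ_i ε_i' Q ε_i + λ_i² ε_i' K' R K ε_i) dt < c. Then for every linear operator φ in the class Ξ₀ with constant d > 0, every solution e of the closed-loop error dynamics ė = (I_N⊗A)e + ((ℒ+G)⊗(B₁K))e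 − ((ℒ+G)⊗B₂)Φ(t) + (G⊗B₂)Φ(t) with e(0) = e⁰, where Φ(t) stacks (φ e_i)(t), satisfies J(u) < c, where J(u) = ∑_{i=1}^N ∫₀^∞ ( (1/2)∑_{j∈N_i}(e_i−e_j)'Q(e_i−e_j) + g_i e_i'Q e_i + u_i'R u_i ) dt and u_i = −K(∑_j a_{ij}(e_i − e_j) + g_i e_i). -/
open Matrix Kronecker MeasureTheory Filter

lemma contOn_dot {n : ℕ} {s : Set ℝ} {v w : ℝ → Fin n → ℝ}
    (hv : ContinuousOn v s) (hw : ContinuousOn w s) :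
    ContinuousOn (fun t => v t ⬝ᵥ w t) s := by
  simp only [dotProduct]
  refine continuousOn_finset_sum _ fun x _ => ContinuousOn.mul ?_ ?_
  · exact (continuous_apply x).comp_continuousOn hv
  · exact (continuous_apply x).comp_continuousOn hw

lemma contOn_pi_mulVec {m n : ℕ} {s : Set ℝ} (M : Matrix (Fin m) (Fin n) ℝ)
    {z : ℝ → Fin n → ℝ} (hz : ContinuousOn z s) :
    ContinuousOn (fun t => M.mulVec (z t)) s := by
  rw [continuousOn_pi]
  intro b
  simp only [Matrix.mulVec, dotProduct]
  exact continuousOn_finset_sum _ fun x _ =>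
    continuousOn_const.mul ((continuous_apply x).comp_continuousOn hz)

lemma integrableOn_Ioc_of_contOn_Ici {h : ℝ → ℝ} (hc : ContinuousOn h (Set.Ici 0)) (Tf : ℝ) :
    IntegrableOn h (Set.Ioc 0 Tf) := by
  have : IntegrableOn h (Set.Icc 0 Tf) :=
    (hc.mono (fun x hx => hx.1)).integrableOn_compact isCompact_Icc
  exact this.mono_set Set.Ioc_subset_Icc_self

lemma trunc_interval_zero {F : ℝ → ℝ} (hF : ∀ t, t < 0 → F t = 0) {τ : ℝ} (hτ : τ < 0) :
    ∫ t in (0:ℝ)..τ, F t = 0 := by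
  rw [intervalIntegral.integral_symm, intervalIntegral.integral_of_le hτ.le]
  have hae : ∀ᵐ (t : ℝ), t ∈ Set.Ioc τ 0 → F t = 0 := by
    have h0 : ∀ᵐ (t : ℝ), t ≠ 0 := by
      rw [ae_iff]
      simpa using Real.volume_singleton
    filter_upwards [h0] with t ht hmem
    exact hF t (lt_of_le_of_ne hmem.2 ht)
  rw [setIntegral_congr_ae measurableSet_Ioc hae]
  simp

lemma sum_subtype_erase {N n : ℕ} (i : Fin N) (F : Fin N → Fin n → ℝ) :
    ∑ x : {j : Fin N // j ≠ i} × Fin n, F x.1.1 x.2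
      = ∑ j ∈ Finset.univ.erase i, ∑ b, F j b := by
  rw [Fintype.sum_prod_type]
  exact (Finset.sum_subtype _ (fun x => by simp) (fun j => ∑ b, F j b)).symm

lemma posdef_dot_nonneg {n : ℕ} {Q : Matrix (Fin n) (Fin n) ℝ} (h : Q.PosDef) (z : Fin n → ℝ) :
    0 ≤ z ⬝ᵥ Q.mulVec z := by
  rcases eq_or_ne z 0 with rfl | hz
  · simp
  · simpa using (h.dotProduct_mulVec_pos hz).le

lemma sum_dot {ι n : Type*} [Fintype n] (s : Finset ι) (f : ι → n → ℝ) (w : n → ℝ) :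
    (∑ j ∈ s, f j) ⬝ᵥ w = ∑ j ∈ s, f j ⬝ᵥ w := by
  simp only [dotProduct, Finset.sum_apply, Finset.sum_mul]
  exact Finset.sum_comm
lemma dot_sum {ι n : Type*} [Fintype n] (s : Finset ι) (f : ι → n → ℝ) (w : n → ℝ) :
    w ⬝ᵥ (∑ j ∈ s, f j) = ∑ j ∈ s, w ⬝ᵥ f j := by
  simp only [dotProduct, Finset.sum_apply, Finset.mul_sum]
  exact Finset.sum_comm
lemma mulVec_sum' {ι m n : Type*} [Fintype n] (s : Finset ι) (Q : Matrix m n ℝ) (f : ι → n → ℝ) :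
    Q.mulVec (∑ j ∈ s, f j) = ∑ j ∈ s, Q.mulVec (f j) := by
  funext b
  simp only [Matrix.mulVec, dotProduct, Finset.sum_apply, Finset.mul_sum]
  exact Finset.sum_comm

lemma dot_mulVec_sum_left {n : Type*} [Fintype n] (Q : Matrix n n ℝ) {ι : Type*} (s : Finset ι)
    (c : ι → ℝ) (v : ι → n → ℝ) (w : n → ℝ) :
    (∑ j ∈ s, c j • v j) ⬝ᵥ Q.mulVec w = ∑ j ∈ s, c j * (v j ⬝ᵥ Q.mulVec w) := by
  rw [sum_dot]
  exact Finset.sum_congr rfl fun j _ => by rw [smul_dotProduct]; simp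

lemma dot_mulVec_sum_right {n : Type*} [Fintype n] (Q : Matrix n n ℝ) {ι : Type*} (s : Finset ι)
    (c : ι → ℝ) (v : n → ℝ) (w : ι → n → ℝ) :
    v ⬝ᵥ Q.mulVec (∑ k ∈ s, c k • w k) = ∑ k ∈ s, c k * (v ⬝ᵥ Q.mulVec (w k)) := by
  rw [mulVec_sum', dot_sum]
  exact Finset.sum_congr rfl fun k _ => by rw [Matrix.mulVec_smul, dotProduct_smul]; simp

lemma quad_transform {N n : ℕ} (Tm : Matrix (Fin N) (Fin N) ℝ) (mu : Fin N → ℝ)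
    (Q : Matrix (Fin n) (Fin n) ℝ) (v : Fin N × Fin n → ℝ) :
    ∑ i, mu i * ((fun x => ∑ j, Tmᵀ i j * v (j, x)) ⬝ᵥ Q.mulVec (fun x => ∑ j, Tmᵀ i j * v (j, x)))
      = ∑ j, ∑ k, (Tm * Matrix.diagonal mu * Tmᵀ) j k * ((fun x => v (j, x)) ⬝ᵥ Q.mulVec (fun x => v (k, x))) := by
  have h : ∀ i : Fin N, (fun x => ∑ j, Tmᵀ i j * v (j, x)) = ∑ j, Tmᵀ i j • (fun x => v (j, x)) := by
    intro i; funext x; simp [Finset.sum_apply]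
  calc ∑ i, mu i * ((fun x => ∑ j, Tmᵀ i j * v (j, x)) ⬝ᵥ Q.mulVec (fun x => ∑ j, Tmᵀ i j * v (j, x)))
      = ∑ i, mu i * ∑ j, Tmᵀ i j * ∑ k, Tmᵀ i k * ((fun x => v (j, x)) ⬝ᵥ Q.mulVec (fun x => v (k, x))) := by
        refine Finset.sum_congr rfl fun i _ => ?_
        rw [h i, dot_mulVec_sum_left]
        congr 1
        refine Finset.sum_congr rfl fun j _ => ?_
        rw [dot_mulVec_sum_right]
    _ = ∑ j, ∑ k, (∑ i, Tm j i * mu i * Tmᵀ i k) * ((fun x => v (j, x)) ⬝ᵥ Q.mulVec (fun x => v (k, x))) := by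
        simp only [Finset.mul_sum, Finset.sum_mul]
        rw [Finset.sum_comm]
        refine Finset.sum_congr rfl fun j _ => ?_
        rw [Finset.sum_comm]
        refine Finset.sum_congr rfl fun k _ => Finset.sum_congr rfl fun i _ => ?_
        simp only [Matrix.transpose_apply]; ring
    _ = _ := by
        refine Finset.sum_congr rfl fun j _ => Finset.sum_congr rfl fun k _ => ?_
        congr 1
        simp [Matrix.mul_apply, Matrix.diagonal, Finset.sum_mul]

lemma mulVec_sum'' {ι m n : Type*} [Fintype n] (s : Finset ι) (Q : Matrix m n ℝ) (f : ι → n → ℝ) :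
    Q.mulVec (∑ j ∈ s, f j) = ∑ j ∈ s, Q.mulVec (f j) := by
  funext b
  simp only [Matrix.mulVec, dotProduct, Finset.sum_apply, Finset.mul_sum]
  exact Finset.sum_comm

lemma mulVec_row_sum {ι n : Type*} [Fintype n] (s : Finset ι) (B : Matrix n n ℝ)
    (c : ι → ℝ) (w : ι → n → ℝ) (b : n) :
    ∑ k ∈ s, c k * (B.mulVec (w k)) b = (B.mulVec (fun x => ∑ k ∈ s, c k * w k x)) b := by
  have h : (fun x => ∑ k ∈ s, c k * w k x) = ∑ k ∈ s, c k • w k := by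
    funext x; simp [Finset.sum_apply]
  rw [h, mulVec_sum'']
  simp only [Finset.sum_apply, Pi.smul_apply, Matrix.mulVec_smul, smul_eq_mul]

lemma kron_row_sum {N n : ℕ} (C M : Matrix (Fin N) (Fin N) ℝ)
    (B : Matrix (Fin n) (Fin n) ℝ) (v : Fin N × Fin n → ℝ) (i : Fin N) (b : Fin n) :
    ∑ j, C i j * ((M ⊗ₖ B).mulVec v) (j, b)
      = ∑ k, (C * M) i k * (B.mulVec (fun x => v (k, x))) b := by
  simp only [Matrix.mulVec, dotProduct, Fintype.sum_prod_type, kroneckerMap_apply,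
    Matrix.mul_apply, Finset.sum_mul, Finset.mul_sum]
  rw [Finset.sum_comm]
  congr 1; ext j
  rw [Finset.sum_comm]
  congr 1; ext k
  congr 1; ext x
  ring

lemma transformed_deriv {N n : ℕ}
    (A B₂ : Matrix (Fin n) (Fin n) ℝ) (BK : Matrix (Fin n) (Fin n) ℝ)
    (M G' F Tm : Matrix (Fin N) (Fin N) ℝ) (lam : Fin N → ℝ)
    (hMT : Tmᵀ * M = Matrix.diagonal lam * Tmᵀ)
    (hGT : Tmᵀ * G' = F * Tmᵀ)
    (v Φv : Fin N × Fin n → ℝ) (ψ : Fin N → Fin n → ℝ)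
    (hψ : ∀ k, ψ k = fun x => ∑ j, Tmᵀ k j * Φv (j, x))
    (i : Fin N) (b : Fin n) :
    ∑ j, Tmᵀ i j * ((((1 : Matrix (Fin N) (Fin N) ℝ) ⊗ₖ A).mulVec v
        + (M ⊗ₖ BK).mulVec v - (M ⊗ₖ B₂).mulVec Φv + (G' ⊗ₖ B₂).mulVec Φv) (j, b))
      = (A.mulVec (fun x => ∑ j, Tmᵀ i j * v (j, x))
          + lam i • BK.mulVec (fun x => ∑ j, Tmᵀ i j * v (j, x))
          + (F i i - lam i) • B₂.mulVec (ψ i)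
          + ∑ k ∈ Finset.univ.erase i, F i k • B₂.mulVec (ψ k)) b := by
  have h1 : ∑ j, Tmᵀ i j * (((1 : Matrix (Fin N) (Fin N) ℝ) ⊗ₖ A).mulVec v) (j, b)
      = (A.mulVec (fun x => ∑ j, Tmᵀ i j * v (j, x))) b := by
    rw [kron_row_sum, ← mulVec_row_sum]
    simp [Matrix.mul_one]
  have h2 : ∑ j, Tmᵀ i j * ((M ⊗ₖ BK).mulVec v) (j, b)
      = lam i * (BK.mulVec (fun x => ∑ j, Tmᵀ i j * v (j, x))) b := by
    rw [kron_row_sum, hMT, ← mulVec_row_sum, Finset.mul_sum]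
    refine Finset.sum_congr rfl fun k _ => ?_
    rw [Matrix.diagonal_mul]
    ring
  have h3 : ∑ j, Tmᵀ i j * ((M ⊗ₖ B₂).mulVec Φv) (j, b)
      = lam i * (B₂.mulVec (ψ i)) b := by
    rw [kron_row_sum, hMT, hψ, ← mulVec_row_sum, Finset.mul_sum]
    refine Finset.sum_congr rfl fun k _ => ?_
    rw [Matrix.diagonal_mul]
    ring
  have h4 : ∑ j, Tmᵀ i j * ((G' ⊗ₖ B₂).mulVec Φv) (j, b)
      = F i i * (B₂.mulVec (ψ i)) b + ∑ k ∈ Finset.univ.erase i, F i k * (B₂.mulVec (ψ k)) b := by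
    rw [kron_row_sum, hGT]
    have : ∀ k, (F * Tmᵀ) i k * (B₂.mulVec (fun x => Φv (k, x))) b
        = ∑ m, F i m * (Tmᵀ m k * (B₂.mulVec (fun x => Φv (k, x))) b) := by
      intro k
      rw [Matrix.mul_apply, Finset.sum_mul]
      exact Finset.sum_congr rfl fun m _ => by ring
    simp only [this]
    rw [Finset.sum_comm]
    have inner : ∀ m, ∑ k, F i m * (Tmᵀ m k * (B₂.mulVec (fun x => Φv (k, x))) b)
        = F i m * (B₂.mulVec (ψ m)) b := by
      intro m
      rw [← Finset.mul_sum, hψ, mulVec_row_sum]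
    simp only [inner]
    exact (Finset.add_sum_erase _ _ (Finset.mem_univ i)).symm
  calc ∑ j, Tmᵀ i j * ((((1 : Matrix (Fin N) (Fin N) ℝ) ⊗ₖ A).mulVec v
        + (M ⊗ₖ BK).mulVec v - (M ⊗ₖ B₂).mulVec Φv + (G' ⊗ₖ B₂).mulVec Φv) (j, b))
      = ∑ j, (Tmᵀ i j * (((1 : Matrix (Fin N) (Fin N) ℝ) ⊗ₖ A).mulVec v) (j, b)
          + Tmᵀ i j * ((M ⊗ₖ BK).mulVec v) (j, b)
          - Tmᵀ i j * ((M ⊗ₖ B₂).mulVec Φv) (j, b)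
          + Tmᵀ i j * ((G' ⊗ₖ B₂).mulVec Φv) (j, b)) := by
        refine Finset.sum_congr rfl fun j _ => ?_
        simp only [Pi.add_apply, Pi.sub_apply]
        ring
    _ = _ := by
        simp only [Finset.sum_add_distrib, Finset.sum_sub_distrib, h1, h2, h3, h4]
        simp only [Pi.add_apply, Pi.smul_apply, Finset.sum_apply, smul_eq_mul]
        ring

lemma graph_quad (a : Fin N → Fin N → ℝ) (hsymm : ∀ i j, a i j = a j i)
    (g : Fin N → ℝ) (q : Fin N → Fin N → ℝ)
    (M : Matrix (Fin N) (Fin N) ℝ)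
    (hM : M = Matrix.diagonal (fun i => ∑ j, a i j) - Matrix.of a + Matrix.diagonal g) :
    ∑ i, ((1/2) * ∑ j, a i j * (q i i - q i j - q j i + q j j) + g i * q i i)
      = ∑ j, ∑ k, M j k * q j k := by
  have hswap1 : ∑ i, ∑ j, a i j * q j j = ∑ i, ∑ j, a i j * q i i := by
    rw [Finset.sum_comm]
    exact Finset.sum_congr rfl fun i _ => Finset.sum_congr rfl fun j _ => by rw [hsymm]
  have hswap2 : ∑ i, ∑ j, a i j * q j i = ∑ i, ∑ j, a i j * q i j := by
    rw [Finset.sum_comm]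
    exact Finset.sum_congr rfl fun i _ => Finset.sum_congr rfl fun j _ => by rw [hsymm]
  have hdiag : ∀ (d : Fin N → ℝ), ∑ j, ∑ k, Matrix.diagonal d j k * q j k = ∑ j, d j * q j j := by
    intro d
    refine Finset.sum_congr rfl fun j _ => ?_
    rw [Finset.sum_eq_single j]
    · simp [Matrix.diagonal_apply_eq]
    · intro k _ hk; simp [Matrix.diagonal_apply_ne _ (Ne.symm hk)]
    · simp
  subst hM
  simp only [Matrix.add_apply, Matrix.sub_apply, add_mul, sub_mul, Finset.sum_add_distrib,
    Finset.sum_sub_distrib, hdiag, Matrix.of_apply]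
  have expand : ∀ i, (1/2 : ℝ) * ∑ j, a i j * (q i i - q i j - q j i + q j j)
      = (1/2) * ((∑ j, a i j * q i i) - (∑ j, a i j * q i j) - (∑ j, a i j * q j i) + ∑ j, a i j * q j j) := by
    intro i
    congr 1
    simp [mul_sub, mul_add, Finset.sum_sub_distrib, Finset.sum_add_distrib]
  simp only [Finset.sum_add_distrib, expand]
  have sumsplit : ∑ i, (1/2:ℝ) * ((∑ j, a i j * q i i) - (∑ j, a i j * q i j) - (∑ j, a i j * q j i) + ∑ j, a i j * q j j)
      = (1/2) * ((∑ i, ∑ j, a i j * q i i) - (∑ i, ∑ j, a i j * q i j) - (∑ i, ∑ j, a i j * q j i) + ∑ i, ∑ j, a i j * q j j) := by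
    rw [← Finset.mul_sum]
    congr 1
    simp only [Finset.sum_sub_distrib, Finset.sum_add_distrib]
  rw [sumsplit, hswap1, hswap2]
  simp only [Finset.sum_mul]
  ring

lemma u_quad {n p : ℕ} (R : Matrix (Fin p) (Fin p) ℝ) (K : Matrix (Fin p) (Fin n) ℝ)
    (z : Fin n → ℝ) :
    (-(K.mulVec z)) ⬝ᵥ R.mulVec (-(K.mulVec z)) = z ⬝ᵥ (Kᵀ * R * K).mulVec z := by
  rw [neg_dotProduct, Matrix.mulVec_neg, dotProduct_neg, neg_neg]
  rw [Matrix.mul_assoc, ← Matrix.mulVec_mulVec, Matrix.dotProduct_mulVec z,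
    Matrix.vecMul_transpose, ← Matrix.mulVec_mulVec]

lemma cost_identity {N n p : ℕ}
    (a : Fin N → Fin N → ℝ) (hsymm : ∀ i j, a i j = a j i) (g : Fin N → ℝ)
    (Mm Tm : Matrix (Fin N) (Fin N) ℝ) (lam : Fin N → ℝ)
    (hMm : Mm = Matrix.diagonal (fun i => ∑ j, a i j) - Matrix.of a + Matrix.diagonal g)
    (hMdef : Tm * Matrix.diagonal lam * Tmᵀ = Mm)
    (hTtT : Tmᵀ * Tm = 1)
    (hMsymm : Mmᵀ = Mm)
    (Q : Matrix (Fin n) (Fin n) ℝ) (R : Matrix (Fin p) (Fin p) ℝ)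
    (K : Matrix (Fin p) (Fin n) ℝ) (v : Fin N × Fin n → ℝ) :
    ∑ i, (lam i * ((fun x => ∑ j, Tmᵀ i j * v (j, x)) ⬝ᵥ Q.mulVec (fun x => ∑ j, Tmᵀ i j * v (j, x)))
        + lam i ^ 2 * ((fun x => ∑ j, Tmᵀ i j * v (j, x)) ⬝ᵥ (Kᵀ * R * K).mulVec (fun x => ∑ j, Tmᵀ i j * v (j, x))))
      = ∑ i, ((1 / 2) * ∑ j, a i j *
            (((fun b => v (i, b)) - fun b => v (j, b)) ⬝ᵥ Q.mulVec ((fun b => v (i, b)) - fun b => v (j, b)))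
          + g i * ((fun b => v (i, b)) ⬝ᵥ Q.mulVec (fun b => v (i, b)))
          + (-(K.mulVec (∑ j, a i j • ((fun b => v (i, b)) - fun b => v (j, b)) + g i • fun b => v (i, b)))) ⬝ᵥ
              R.mulVec (-(K.mulVec (∑ j, a i j • ((fun b => v (i, b)) - fun b => v (j, b)) + g i • fun b => v (i, b))))) := by
  have key2 : Tm * Matrix.diagonal (fun i => lam i ^ 2) * Tmᵀ = Mm * Mm := by
    have : Matrix.diagonal (fun i => lam i ^ 2) = Matrix.diagonal lam * Matrix.diagonal lam := by
      rw [Matrix.diagonal_mul_diagonal]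
      exact congrArg Matrix.diagonal (funext fun i => by ring)
    rw [this, ← hMdef]
    calc Tm * (Matrix.diagonal lam * Matrix.diagonal lam) * Tmᵀ
        = Tm * Matrix.diagonal lam * (Tmᵀ * Tm) * Matrix.diagonal lam * Tmᵀ := by
          rw [hTtT]; noncomm_ring
      _ = Tm * Matrix.diagonal lam * Tmᵀ * (Tm * Matrix.diagonal lam * Tmᵀ) := by noncomm_ring
  -- z identity
  have hz : ∀ i : Fin N,
      (∑ j, a i j • ((fun b => v (i, b)) - fun b => v (j, b)) + g i • fun b => v (i, b))
        = fun x => ∑ j, Mmᵀ i j * v (j, x) := by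
    intro i
    funext b
    rw [hMsymm, hMm]
    simp only [Finset.sum_apply, Pi.add_apply, Pi.smul_apply, Pi.sub_apply, smul_eq_mul,
      Matrix.add_apply, Matrix.sub_apply, Matrix.diagonal_apply, Matrix.of_apply,
      ite_mul, zero_mul, add_mul, sub_mul, Finset.sum_add_distrib, Finset.sum_sub_distrib,
      Finset.sum_ite_eq, Finset.mem_univ, if_true, mul_sub, Finset.sum_mul]
  -- split sums
  rw [Finset.sum_add_distrib]
  have part1 : ∑ i, lam i * ((fun x => ∑ j, Tmᵀ i j * v (j, x)) ⬝ᵥ Q.mulVec (fun x => ∑ j, Tmᵀ i j * v (j, x)))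
      = ∑ i, ((1 / 2) * ∑ j, a i j *
            (((fun b => v (i, b)) - fun b => v (j, b)) ⬝ᵥ Q.mulVec ((fun b => v (i, b)) - fun b => v (j, b)))
          + g i * ((fun b => v (i, b)) ⬝ᵥ Q.mulVec (fun b => v (i, b)))) := by
    rw [quad_transform, hMdef, ← graph_quad a hsymm g _ _ hMm]
    refine Finset.sum_congr rfl fun i _ => ?_
    congr 2
    refine Finset.sum_congr rfl fun j _ => ?_
    congr 1
    rw [sub_dotProduct, Matrix.mulVec_sub, dotProduct_sub, dotProduct_sub]
    ring
  have part2 : ∑ i, lam i ^ 2 * ((fun x => ∑ j, Tmᵀ i j * v (j, x)) ⬝ᵥ (Kᵀ * R * K).mulVec (fun x => ∑ j, Tmᵀ i j * v (j, x)))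
      = ∑ i, (-(K.mulVec (∑ j, a i j • ((fun b => v (i, b)) - fun b => v (j, b)) + g i • fun b => v (i, b)))) ⬝ᵥ
              R.mulVec (-(K.mulVec (∑ j, a i j • ((fun b => v (i, b)) - fun b => v (j, b)) + g i • fun b => v (i, b)))) := by
    have lhs := quad_transform Tm (fun i => lam i ^ 2) (Kᵀ * R * K) v
    rw [lhs, key2]
    have rhs : ∀ i, (-(K.mulVec (∑ j, a i j • ((fun b => v (i, b)) - fun b => v (j, b)) + g i • fun b => v (i, b)))) ⬝ᵥ
              R.mulVec (-(K.mulVec (∑ j, a i j • ((fun b => v (i, b)) - fun b => v (j, b)) + g i • fun b => v (i, b))))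
        = ((fun x => ∑ j, Mmᵀ i j * v (j, x)) ⬝ᵥ (Kᵀ * R * K).mulVec (fun x => ∑ j, Mmᵀ i j * v (j, x))) := by
      intro i
      rw [u_quad, hz i]
    simp only [rhs, hMsymm]
    have h2' := quad_transform Mmᵀ (fun _ => (1:ℝ)) (Kᵀ * R * K) v
    simp only [one_mul, Matrix.transpose_transpose, Matrix.diagonal_one, Matrix.mul_one,
      hMsymm] at h2'
    rw [h2']
  rw [part1, part2, ← Finset.sum_add_distrib]

noncomputable def Jint {n p N : ℕ} (a : Fin N → Fin N → ℝ) (g : Fin N → ℝ)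
    (Q : Matrix (Fin n) (Fin n) ℝ) (R : Matrix (Fin p) (Fin p) ℝ)
    (K : Matrix (Fin p) (Fin n) ℝ) (e : ℝ → Fin N × Fin n → ℝ) (i : Fin N) (t : ℝ) : ℝ :=
  (1 / 2) * ∑ j, a i j *
      (((fun b => e t (i, b)) - fun b => e t (j, b)) ⬝ᵥ
        Q.mulVec ((fun b => e t (i, b)) - fun b => e t (j, b)))
  + g i * ((fun b => e t (i, b)) ⬝ᵥ Q.mulVec (fun b => e t (i, b)))
  + (-(K.mulVec (∑ j, a i j • ((fun b => e t (i, b)) - fun b => e t (j, b))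
        + g i • fun b => e t (i, b)))) ⬝ᵥ
      R.mulVec
        (-(K.mulVec (∑ j, a i j • ((fun b => e t (i, b)) - fun b => e t (j, b))
          + g i • fun b => e t (i, b))))


/-- Lemma 2. If every solution of the auxiliary interconnected system
`ε̇_i = Aε_i + λ_iB₁Kε_i + E_iξ_i + L_iη_i`, `ε_i(0) = ε0_i`, driven by inputs satisfying the
IQCs, has cost `Ĵ = ∑ᵢ ∫₀^∞ (λᵢ εᵢ'Qεᵢ + λᵢ² εᵢ'K'RKεᵢ) dt < c`, then for every linear
operator `φ ∈ Ξ₀` with constant `d > 0`, every solution of the closed-loop error dynamics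
with `e(0) = e0` has cost `J(u) < c`. -/
theorem stmt3_auxiliary_problem_implies_tracking
    (n p N : ℕ) (hN : 2 ≤ N)
    (A : Matrix (Fin n) (Fin n) ℝ)
    (B₁ : Matrix (Fin n) (Fin p) ℝ)
    (B₂ : Matrix (Fin n) (Fin n) ℝ)
    -- graph, pinning and spectral data
    (a : Fin N → Fin N → ℝ)
    (hsymm : ∀ i j, a i j = a j i)
    (hdiaga : ∀ i, a i i = 0)
    (h01 : ∀ i j, a i j = 0 ∨ a i j = 1)
    (hconn : ∀ i j : Fin N, Relation.ReflTransGen (fun u v => a u v = 1) i j)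
    (g : Fin N → ℝ) (hg01 : ∀ i, g i = 0 ∨ g i = 1) (hgne : ∃ i, g i = 1)
    (L : Matrix (Fin N) (Fin N) ℝ)
    (hL : L = Matrix.diagonal (fun i => ∑ j, a i j) - Matrix.of a)
    (G : Matrix (Fin N) (Fin N) ℝ) (hG : G = Matrix.diagonal g)
    (lam : Fin N → ℝ) (hlampos : ∀ i, 0 < lam i)
    (T : Matrix (Fin N) (Fin N) ℝ)
    (hT : T * Tᵀ = 1)
    (hTdiag : Tᵀ * (L + G) * T = Matrix.diagonal lam)
    (f : Fin N → Fin N → ℝ) (hf : f = fun i j => (Tᵀ * G * T) i j)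
    (Li : (i : Fin N) → Matrix (Fin n) ({j : Fin N // j ≠ i} × Fin n) ℝ)
    (hLi : ∀ i, Li i = Matrix.of fun b x => f i x.1.1 * B₂ b x.2)
    -- weights, data of the problem
    (Q : Matrix (Fin n) (Fin n) ℝ) (hQ : Q.PosDef)
    (R : Matrix (Fin p) (Fin p) ℝ) (hR : R.PosDef)
    (e0 : Fin N × Fin n → ℝ)
    (K : Matrix (Fin p) (Fin n) ℝ)
    (c : ℝ) (hc : 0 < c)
    (ε0 : Fin N × Fin n → ℝ)
    (hε0 : ε0 = (Tᵀ ⊗ₖ (1 : Matrix (Fin n) (Fin n) ℝ)).mulVec e0)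
    -- hypothesis: guaranteed cost for the auxiliary interconnected large-scale system
    (haux : ∀ (ξ : Fin N → ℝ → Fin n → ℝ)
        (η : (i : Fin N) → ℝ → {j : Fin N // j ≠ i} × Fin n → ℝ)
        (ε : Fin N → ℝ → Fin n → ℝ),
      -- locally square-integrable inputs
      (∀ i (Tf : ℝ), IntegrableOn (fun t => ξ i t ⬝ᵥ ξ i t) (Set.Ioc 0 Tf)) →
      (∀ i (Tf : ℝ), IntegrableOn (fun t => η i t ⬝ᵥ η i t) (Set.Ioc 0 Tf)) →
      -- the IQCs relating the inputs to the solution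
      (∃ (tl : ℕ → ℝ) (d : ℝ), Tendsto tl atTop atTop ∧ 0 < d ∧
        ∀ l (i : Fin N),
          ((∫ t in (0:ℝ)..(tl l), ξ i t ⬝ᵥ ξ i t)
              ≤ (∫ t in (0:ℝ)..(tl l), ε i t ⬝ᵥ ε i t) + d)
          ∧ ((∫ t in (0:ℝ)..(tl l), η i t ⬝ᵥ η i t)
              ≤ (∫ t in (0:ℝ)..(tl l), ∑ j ∈ Finset.univ.erase i, ε j t ⬝ᵥ ε j t)
                + ((N : ℝ) - 1) * d)) →
      -- ε is a solution of the interconnected system with ε_i(0) = ε0_i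
      (∀ i : Fin N, ε i 0 = fun b => ε0 (i, b)) →
      (∀ i : Fin N, ∀ t ∈ Set.Ici (0:ℝ),
        HasDerivWithinAt (ε i)
          (A.mulVec (ε i t) + lam i • (B₁ * K).mulVec (ε i t)
            + (f i i - lam i) • B₂.mulVec (ξ i t) + (Li i).mulVec (η i t))
          (Set.Ici 0) t) →
      -- then the auxiliary cost is finite and below c
      ((∀ i : Fin N, IntegrableOn
          (fun t => lam i * (ε i t ⬝ᵥ Q.mulVec (ε i t))
            + (lam i) ^ 2 * (ε i t ⬝ᵥ (Kᵀ * R * K).mulVec (ε i t))) (Set.Ioi (0:ℝ)))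
        ∧ (∑ i, ∫ t in Set.Ioi (0:ℝ),
            (lam i * (ε i t ⬝ᵥ Q.mulVec (ε i t))
              + (lam i) ^ 2 * (ε i t ⬝ᵥ (Kᵀ * R * K).mulVec (ε i t)))) < c)) :
    -- conclusion: guaranteed tracking cost for the original system
    ∀ d : ℝ, 0 < d →
    ∀ φ : (ℝ → Fin n → ℝ) → (ℝ → Fin n → ℝ),
      -- φ is linear
      (∀ y z, φ (y + z) = φ y + φ z) →
      (∀ (r : ℝ) y, φ (r • y) = r • φ y) →
      -- φ maps L₂e into L₂e
      (∀ y : ℝ → Fin n → ℝ,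
        (∀ Tf : ℝ, IntegrableOn (fun t => y t ⬝ᵥ y t) (Set.Ioc 0 Tf)) →
        (∀ Tf : ℝ, IntegrableOn (fun t => φ y t ⬝ᵥ φ y t) (Set.Ioc 0 Tf))) →
      -- φ satisfies the IQC of class Ξ₀ with constant d
      (∃ tl : ℕ → ℝ, Tendsto tl atTop atTop ∧
        ∀ l, ∀ y : ℝ → Fin n → ℝ,
          (∀ Tf : ℝ, IntegrableOn (fun t => y t ⬝ᵥ y t) (Set.Ioc 0 Tf)) →
          (∫ t in (0:ℝ)..(tl l), φ y t ⬝ᵥ φ y t)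
            ≤ (∫ t in (0:ℝ)..(tl l), y t ⬝ᵥ y t) + d) →
    ∀ e : ℝ → Fin N × Fin n → ℝ,
      e 0 = e0 →
      -- e solves the closed-loop error dynamics
      (∀ t ∈ Set.Ici (0:ℝ),
        HasDerivWithinAt e
          (((1 : Matrix (Fin N) (Fin N) ℝ) ⊗ₖ A).mulVec (e t)
            + ((L + G) ⊗ₖ (B₁ * K)).mulVec (e t)
            - ((L + G) ⊗ₖ B₂).mulVec
                (fun x : Fin N × Fin n => φ (fun s b => e s (x.1, b)) t x.2)
            + (G ⊗ₖ B₂).mulVec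
                (fun x : Fin N × Fin n => φ (fun s b => e s (x.1, b)) t x.2))
          (Set.Ici 0) t) →
      -- then the tracking cost is finite and below c
      ((∀ i : Fin N, IntegrableOn
          (fun t =>
            (1 / 2) * ∑ j, a i j *
                (((fun b => e t (i, b)) - fun b => e t (j, b)) ⬝ᵥ
                  Q.mulVec ((fun b => e t (i, b)) - fun b => e t (j, b)))
            + g i * ((fun b => e t (i, b)) ⬝ᵥ Q.mulVec (fun b => e t (i, b)))
            + (-(K.mulVec (∑ j, a i j • ((fun b => e t (i, b)) - fun b => e t (j, b))
                  + g i • fun b => e t (i, b)))) ⬝ᵥ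
                R.mulVec
                  (-(K.mulVec (∑ j, a i j • ((fun b => e t (i, b)) - fun b => e t (j, b))
                    + g i • fun b => e t (i, b)))))
          (Set.Ioi (0:ℝ)))
      ∧ (∑ i, ∫ t in Set.Ioi (0:ℝ),
            ((1 / 2) * ∑ j, a i j *
                (((fun b => e t (i, b)) - fun b => e t (j, b)) ⬝ᵥ
                  Q.mulVec ((fun b => e t (i, b)) - fun b => e t (j, b)))
            + g i * ((fun b => e t (i, b)) ⬝ᵥ Q.mulVec (fun b => e t (i, b)))
            + (-(K.mulVec (∑ j, a i j • ((fun b => e t (i, b)) - fun b => e t (j, b))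
                  + g i • fun b => e t (i, b)))) ⬝ᵥ
                R.mulVec
                  (-(K.mulVec (∑ j, a i j • ((fun b => e t (i, b)) - fun b => e t (j, b))
                    + g i • fun b => e t (i, b)))))) < c) := by
  intro d hd φ hφadd hφsmul hφmap hφIQC e he0 hdyn
  classical
  -- matrix facts
  have hTtT : Tᵀ * T = 1 := mul_eq_one_comm.mp hT
  have hMdef : T * Matrix.diagonal lam * Tᵀ = L + G := by
    rw [← hTdiag]
    have h1 : T * (Tᵀ * (L + G) * T) * Tᵀ = T * Tᵀ * (L + G) * (T * Tᵀ) := by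
      noncomm_ring
    rw [h1, hT, one_mul, mul_one]
  have hMT : Tᵀ * (L + G) = Matrix.diagonal lam * Tᵀ := by
    have h1 : Tᵀ * (L + G) = Tᵀ * (L + G) * T * Tᵀ := by
      rw [Matrix.mul_assoc (Tᵀ * (L + G)) T Tᵀ, hT, mul_one]
    rw [h1, hTdiag]
  have hGT : Tᵀ * G = Matrix.of f * Tᵀ := by
    have hfM : Matrix.of f = Tᵀ * G * T := by
      ext i j; simp [hf]
    rw [hfM, Matrix.mul_assoc (Tᵀ * G) T Tᵀ, hT, mul_one]
  have haT : (Matrix.of a)ᵀ = Matrix.of a := by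
    ext i j; simp [Matrix.transpose_apply, hsymm i j]
  have hMsymm : (L + G)ᵀ = L + G := by
    rw [hL, hG, Matrix.transpose_add, Matrix.transpose_sub, Matrix.diagonal_transpose,
      Matrix.diagonal_transpose, haT]
  have hMm : L + G = Matrix.diagonal (fun i => ∑ j, a i j) - Matrix.of a + Matrix.diagonal g := by
    rw [hL, hG]
  -- φ linearity
  have hφ0 : φ 0 = 0 := by
    have h := hφsmul 0 0
    simpa using h
  have hφsum : ∀ (s : Finset (Fin N)) (cc : Fin N → ℝ) (y : Fin N → ℝ → Fin n → ℝ),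
      φ (∑ j ∈ s, cc j • y j) = ∑ j ∈ s, cc j • φ (y j) := by
    intro s cc y
    induction s using Finset.induction_on with
    | empty => simpa using hφ0
    | @insert j s hnot ih =>
        rw [Finset.sum_insert hnot, hφadd, hφsmul, ih, Finset.sum_insert hnot]
  -- transformed state
  set εf : Fin N → ℝ → Fin n → ℝ := fun i t x => ∑ j, Tᵀ i j * e t (j, x) with hεf_def
  set ψ : Fin N → ℝ → Fin n → ℝ := fun i => φ (εf i) with hψ_def
  have hεf_sum : ∀ i, εf i = ∑ k, Tᵀ i k • (fun s b => e s (k, b)) := by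
    intro i; funext t x; simp [hεf_def, Finset.sum_apply]
  have hψpt : ∀ i t x, ψ i t x = ∑ k, Tᵀ i k * (φ (fun s b => e s (k, b))) t x := by
    intro i t x
    rw [hψ_def]
    show φ (εf i) t x = _
    rw [hεf_sum i, hφsum Finset.univ (fun k => Tᵀ i k) (fun k => fun s b => e s (k, b))]
    simp [Finset.sum_apply]
  -- continuity
  have hecont : ContinuousOn e (Set.Ici 0) := fun t ht => (hdyn t ht).continuousWithinAt
  have heicont : ∀ k : Fin N, ContinuousOn (fun t => (fun b => e t (k, b))) (Set.Ici (0:ℝ)) := by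
    intro k
    rw [continuousOn_pi]
    intro b
    exact (continuous_apply ((k, b) : Fin N × Fin n)).comp_continuousOn hecont
  have hεcont : ∀ i, ContinuousOn (εf i) (Set.Ici 0) := by
    intro i
    rw [hεf_def, continuousOn_pi]
    intro x
    exact continuousOn_finset_sum _ fun j _ =>
      continuousOn_const.mul ((continuous_apply ((j, x) : Fin N × Fin n)).comp_continuousOn hecont)
  have hεL2 : ∀ i (Tf : ℝ), IntegrableOn (fun t => εf i t ⬝ᵥ εf i t) (Set.Ioc 0 Tf) :=
    fun i Tf => integrableOn_Ioc_of_contOn_Ici (contOn_dot (hεcont i) (hεcont i)) Tf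
  have hψL2 : ∀ i (Tf : ℝ), IntegrableOn (fun t => ψ i t ⬝ᵥ ψ i t) (Set.Ioc 0 Tf) := by
    intro i Tf
    rw [hψ_def]
    exact hφmap (εf i) (hεL2 i) Tf
  -- truncations
  set εt : Fin N → ℝ → Fin n → ℝ := fun i t => if 0 ≤ t then εf i t else 0 with hεt_def
  set ξt : Fin N → ℝ → Fin n → ℝ := fun i t => if 0 ≤ t then ψ i t else 0 with hξt_def
  set ηt : (i : Fin N) → ℝ → {j : Fin N // j ≠ i} × Fin n → ℝ :=
    fun i t => if 0 ≤ t then (fun x => ψ x.1.1 t x.2) else 0 with hηt_def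
  have hεt_pos : ∀ i t, 0 ≤ t → εt i t = εf i t := by
    intro i t ht; rw [hεt_def]; simp [ht]
  have hξt_pos : ∀ i t, 0 ≤ t → ξt i t = ψ i t := by
    intro i t ht; rw [hξt_def]; simp [ht]
  have hηt_pos : ∀ i t, 0 ≤ t → ηt i t = fun x => ψ x.1.1 t x.2 := by
    intro i t ht; rw [hηt_def]; simp [ht]
  have hεt_neg : ∀ i t, t < 0 → εt i t = 0 := by
    intro i t ht; rw [hεt_def]; simp [not_le.mpr ht]
  have hξt_neg : ∀ i t, t < 0 → ξt i t = 0 := by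
    intro i t ht; rw [hξt_def]; simp [not_le.mpr ht]
  have hηt_neg : ∀ i t, t < 0 → ηt i t = 0 := by
    intro i t ht; rw [hηt_def]; simp [not_le.mpr ht]
  -- local square integrability of the truncated inputs
  have hξtL2 : ∀ i (Tf : ℝ), IntegrableOn (fun t => ξt i t ⬝ᵥ ξt i t) (Set.Ioc 0 Tf) := by
    intro i Tf
    refine (hψL2 i Tf).congr_fun (fun t ht => ?_) measurableSet_Ioc
    rw [hξt_pos i t ht.1.le]
  have hηdot : ∀ i t, 0 ≤ t → ηt i t ⬝ᵥ ηt i t = ∑ j ∈ Finset.univ.erase i, ψ j t ⬝ᵥ ψ j t := by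
    intro i t ht
    rw [hηt_pos i t ht]
    show ∑ x : {j : Fin N // j ≠ i} × Fin n, ψ x.1.1 t x.2 * ψ x.1.1 t x.2 = _
    rw [sum_subtype_erase i (fun j b => ψ j t b * ψ j t b)]
    rfl
  have hηtL2 : ∀ i (Tf : ℝ), IntegrableOn (fun t => ηt i t ⬝ᵥ ηt i t) (Set.Ioc 0 Tf) := by
    intro i Tf
    have base : IntegrableOn (fun t => ∑ j ∈ Finset.univ.erase i, ψ j t ⬝ᵥ ψ j t) (Set.Ioc 0 Tf) :=
      integrable_finset_sum _ (fun j _ => hψL2 j Tf)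
    refine base.congr_fun (fun t ht => ?_) measurableSet_Ioc
    rw [hηdot i t ht.1.le]


  -- interval integral facts
  obtain ⟨tl, htl, hIQ⟩ := hφIQC
  have hIQpack : ∃ (tl' : ℕ → ℝ) (d' : ℝ), Tendsto tl' atTop atTop ∧ 0 < d' ∧
      ∀ l (i : Fin N),
        ((∫ t in (0:ℝ)..(tl' l), ξt i t ⬝ᵥ ξt i t)
            ≤ (∫ t in (0:ℝ)..(tl' l), εt i t ⬝ᵥ εt i t) + d')
        ∧ ((∫ t in (0:ℝ)..(tl' l), ηt i t ⬝ᵥ ηt i t)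
            ≤ (∫ t in (0:ℝ)..(tl' l), ∑ j ∈ Finset.univ.erase i, εt j t ⬝ᵥ εt j t)
              + ((N : ℝ) - 1) * d') := by
    refine ⟨tl, d, htl, hd, fun l i => ?_⟩
    have hN1 : (0:ℝ) ≤ ((N:ℝ) - 1) * d := by
      have h2 : (2:ℝ) ≤ (N:ℝ) := by exact_mod_cast hN
      nlinarith [hd.le]
    rcases lt_or_ge (tl l) 0 with hneg | hpos
    · constructor
      · rw [trunc_interval_zero (fun t ht => by rw [hξt_neg i t ht]; simp) hneg,
          trunc_interval_zero (fun t ht => by rw [hεt_neg i t ht]; simp) hneg]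
        simpa using hd.le
      · rw [trunc_interval_zero (fun t ht => by rw [hηt_neg i t ht]; simp) hneg,
          trunc_interval_zero (F := fun t => ∑ j ∈ Finset.univ.erase i, εt j t ⬝ᵥ εt j t)
            (fun t ht => by
              refine Finset.sum_eq_zero fun j _ => ?_
              rw [hεt_neg j t ht]; simp) hneg]
        simpa using hN1
    · have hIcc : ∀ t, t ∈ Set.uIcc (0:ℝ) (tl l) → 0 ≤ t := by
        intro t ht
        rw [Set.uIcc_of_le hpos] at ht
        exact ht.1
      have heq1 : (∫ t in (0:ℝ)..(tl l), ξt i t ⬝ᵥ ξt i t)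
          = ∫ t in (0:ℝ)..(tl l), ψ i t ⬝ᵥ ψ i t :=
        intervalIntegral.integral_congr (fun t ht => by rw [hξt_pos i t (hIcc t ht)])
      have heq2 : ∀ j, (∫ t in (0:ℝ)..(tl l), εt j t ⬝ᵥ εt j t)
          = ∫ t in (0:ℝ)..(tl l), εf j t ⬝ᵥ εf j t := fun j =>
        intervalIntegral.integral_congr (fun t ht => by rw [hεt_pos j t (hIcc t ht)])
      have hII : ∀ j : Fin N, IntervalIntegrable (fun t => ψ j t ⬝ᵥ ψ j t) volume 0 (tl l) := by
        intro j
        rw [intervalIntegrable_iff, Set.uIoc_of_le hpos]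
        exact hψL2 j (tl l)
      have hIIε : ∀ j : Fin N, IntervalIntegrable (fun t => εf j t ⬝ᵥ εf j t) volume 0 (tl l) := by
        intro j
        rw [intervalIntegrable_iff, Set.uIoc_of_le hpos]
        exact hεL2 j (tl l)
      constructor
      · rw [heq1, heq2 i]
        exact hIQ l (εf i) (hεL2 i)
      · have heq3 : (∫ t in (0:ℝ)..(tl l), ηt i t ⬝ᵥ ηt i t)
            = ∑ j ∈ Finset.univ.erase i, ∫ t in (0:ℝ)..(tl l), ψ j t ⬝ᵥ ψ j t := by
          rw [intervalIntegral.integral_congr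
            (g := fun t => ∑ j ∈ Finset.univ.erase i, ψ j t ⬝ᵥ ψ j t)
            (fun t ht => by rw [hηdot i t (hIcc t ht)])]
          exact intervalIntegral.integral_finset_sum (fun j _ => hII j)
        have heq4 : (∫ t in (0:ℝ)..(tl l), ∑ j ∈ Finset.univ.erase i, εt j t ⬝ᵥ εt j t)
            = ∑ j ∈ Finset.univ.erase i, ∫ t in (0:ℝ)..(tl l), εf j t ⬝ᵥ εf j t := by
          rw [intervalIntegral.integral_congr
            (g := fun t => ∑ j ∈ Finset.univ.erase i, εf j t ⬝ᵥ εf j t)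
            (fun t ht => Finset.sum_congr rfl fun j _ => by rw [hεt_pos j t (hIcc t ht)])]
          exact intervalIntegral.integral_finset_sum (fun j _ => hIIε j)
        rw [heq3, heq4]
        have hcard : (Finset.univ.erase i).card = N - 1 := by
          rw [Finset.card_erase_of_mem (Finset.mem_univ i), Finset.card_univ, Fintype.card_fin]
        calc ∑ j ∈ Finset.univ.erase i, ∫ t in (0:ℝ)..(tl l), ψ j t ⬝ᵥ ψ j t
            ≤ ∑ j ∈ Finset.univ.erase i, ((∫ t in (0:ℝ)..(tl l), εf j t ⬝ᵥ εf j t) + d) :=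
              Finset.sum_le_sum fun j _ => hIQ l (εf j) (hεL2 j)
          _ = (∑ j ∈ Finset.univ.erase i, ∫ t in (0:ℝ)..(tl l), εf j t ⬝ᵥ εf j t)
              + ((N:ℝ) - 1) * d := by
              rw [Finset.sum_add_distrib, Finset.sum_const, hcard, nsmul_eq_mul]
              congr 2
              rw [Nat.cast_sub (by omega : 1 ≤ N), Nat.cast_one]
  -- initial condition
  have hεt0 : ∀ i : Fin N, εt i 0 = fun b => ε0 (i, b) := by
    intro i
    funext b
    rw [hεt_pos i 0 le_rfl, hε0, hεf_def]
    simp only [Matrix.mulVec, dotProduct, Fintype.sum_prod_type, kroneckerMap_apply,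
      Matrix.one_apply, he0]
    refine Finset.sum_congr rfl fun j _ => ?_
    rw [Finset.sum_eq_single b]
    · simp
    · intro x _ hx; simp [Ne.symm hx]
    · simp
    -- Li action
  have hLiact : ∀ (i : Fin N) (t : ℝ) (b : Fin n), ((Li i).mulVec (fun x => ψ x.1.1 t x.2)) b
      = ∑ k ∈ Finset.univ.erase i, f i k * (B₂.mulVec (ψ k t)) b := by
    intro i t b
    rw [hLi i]
    show ∑ x : {j : Fin N // j ≠ i} × Fin n,
        (Matrix.of fun b (x : {j : Fin N // j ≠ i} × Fin n) => f i x.1.1 * B₂ b x.2) b x * ψ x.1.1 t x.2 = _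
    simp only [Matrix.of_apply]
    rw [show (∑ x : {j : Fin N // j ≠ i} × Fin n, f i x.1.1 * B₂ b x.2 * ψ x.1.1 t x.2)
        = ∑ x : {j : Fin N // j ≠ i} × Fin n,
            (fun (j : Fin N) (y : Fin n) => f i j * B₂ b y * ψ j t y) x.1.1 x.2 from rfl,
      sum_subtype_erase i (fun j y => f i j * B₂ b y * ψ j t y)]
    refine Finset.sum_congr rfl fun j _ => ?_
    show _ = f i j * ∑ y, B₂ b y * ψ j t y
    rw [Finset.mul_sum]
    exact Finset.sum_congr rfl fun y _ => by ring
  -- derivative of the transformed state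
  have hεtderiv : ∀ i : Fin N, ∀ t ∈ Set.Ici (0:ℝ),
      HasDerivWithinAt (εt i)
        (A.mulVec (εt i t) + lam i • (B₁ * K).mulVec (εt i t)
          + (f i i - lam i) • B₂.mulVec (ξt i t) + (Li i).mulVec (ηt i t)) (Set.Ici 0) t := by
    intro i t ht
    have h0t : (0:ℝ) ≤ t := ht
    have hD := hdyn t ht
    set V : Fin N × Fin n → ℝ := (((1 : Matrix (Fin N) (Fin N) ℝ) ⊗ₖ A).mulVec (e t)
            + ((L + G) ⊗ₖ (B₁ * K)).mulVec (e t)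
            - ((L + G) ⊗ₖ B₂).mulVec (fun x : Fin N × Fin n => φ (fun s b => e s (x.1, b)) t x.2)
            + (G ⊗ₖ B₂).mulVec (fun x : Fin N × Fin n => φ (fun s b => e s (x.1, b)) t x.2))
      with hV
    have hcoord := hasDerivWithinAt_pi.mp hD
    have hεfder : HasDerivWithinAt (εf i) (fun b => ∑ j, Tᵀ i j * V (j, b)) (Set.Ici 0) t := by
      rw [hεf_def, hasDerivWithinAt_pi]
      intro b
      exact HasDerivWithinAt.fun_sum fun j _ => (hcoord (j, b)).const_mul _
    have hval : (fun b => ∑ j, Tᵀ i j * V (j, b))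
        = A.mulVec (εf i t) + lam i • (B₁ * K).mulVec (εf i t)
          + ((Matrix.of f) i i - lam i) • B₂.mulVec (ψ i t)
          + ∑ k ∈ Finset.univ.erase i, (Matrix.of f) i k • B₂.mulVec (ψ k t) := by
      funext b
      rw [hV]
      simp only [hεf_def]
      exact transformed_deriv A B₂ (B₁ * K) (L + G) G (Matrix.of f) T lam hMT hGT (e t)
        (fun x : Fin N × Fin n => φ (fun s b => e s (x.1, b)) t x.2) (fun k => ψ k t)
        (fun k => by funext x; exact hψpt k t x) i b
    rw [hval] at hεfder
    have hder2 : HasDerivWithinAt (εt i)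
        (A.mulVec (εf i t) + lam i • (B₁ * K).mulVec (εf i t)
          + ((Matrix.of f) i i - lam i) • B₂.mulVec (ψ i t)
          + ∑ k ∈ Finset.univ.erase i, (Matrix.of f) i k • B₂.mulVec (ψ k t)) (Set.Ici 0) t :=
      hεfder.congr (fun s hs => hεt_pos i s hs) (hεt_pos i t h0t)
    have hfinal : A.mulVec (εt i t) + lam i • (B₁ * K).mulVec (εt i t)
          + (f i i - lam i) • B₂.mulVec (ξt i t) + (Li i).mulVec (ηt i t)
        = A.mulVec (εf i t) + lam i • (B₁ * K).mulVec (εf i t)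
          + ((Matrix.of f) i i - lam i) • B₂.mulVec (ψ i t)
          + ∑ k ∈ Finset.univ.erase i, (Matrix.of f) i k • B₂.mulVec (ψ k t) := by
      rw [hεt_pos i t h0t, hξt_pos i t h0t, hηt_pos i t h0t]
      congr 1
      funext b
      rw [hLiact i t b]
      simp only [Finset.sum_apply, Pi.smul_apply, smul_eq_mul, Matrix.of_apply]
    rw [hfinal]
    exact hder2
  -- apply the auxiliary guaranteed-cost hypothesis
  obtain ⟨hIntAux, hSumAux⟩ := haux ξt ηt εt hξtL2 hηtL2 hIQpack hεt0 hεtderiv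
  -- pointwise cost identity
  have hptwise : ∀ t ∈ Set.Ioi (0:ℝ),
      (∑ i, (lam i * (εt i t ⬝ᵥ Q.mulVec (εt i t))
          + lam i ^ 2 * (εt i t ⬝ᵥ (Kᵀ * R * K).mulVec (εt i t))))
        = ∑ i, Jint a g Q R K e i t := by
    intro t ht
    have h0t : (0:ℝ) ≤ t := le_of_lt ht
    have hεteq : ∀ i, εt i t = fun x => ∑ j, Tᵀ i j * (e t) (j, x) := by
      intro i
      rw [hεt_pos i t h0t]
      try simp only [hεf_def]
    simp only [hεteq, Jint]
    exact cost_identity a hsymm g (L + G) T lam hMm hMdef hTtT hMsymm Q R K (e t)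
  -- continuity of the tracking cost integrand
  have hJcont : ∀ i : Fin N, ContinuousOn (fun t => Jint a g Q R K e i t) (Set.Ici 0) := by
    intro i
    have hsub : ∀ j : Fin N,
        ContinuousOn (fun t => ((fun b => e t (i, b)) - fun b => e t (j, b))) (Set.Ici (0:ℝ)) :=
      fun j => (heicont i).sub (heicont j)
    have hz : ContinuousOn (fun t => (∑ j, a i j • ((fun b => e t (i, b)) - fun b => e t (j, b))
        + g i • fun b => e t (i, b))) (Set.Ici (0:ℝ)) := by
      refine ContinuousOn.add ?_ ?_
      · exact continuousOn_finset_sum _ fun j _ => (hsub j).const_smul (a i j)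
      · exact (heicont i).const_smul (g i)
    have hu : ContinuousOn (fun t => (-(K.mulVec (∑ j, a i j • ((fun b => e t (i, b)) - fun b => e t (j, b))
        + g i • fun b => e t (i, b))))) (Set.Ici (0:ℝ)) := (contOn_pi_mulVec K hz).neg
    simp only [Jint]
    refine ContinuousOn.add (ContinuousOn.add ?_ ?_) ?_
    · refine continuousOn_const.mul (continuousOn_finset_sum _ fun j _ => ?_)
      exact continuousOn_const.mul (contOn_dot (hsub j) (contOn_pi_mulVec Q (hsub j)))
    · exact continuousOn_const.mul (contOn_dot (heicont i) (contOn_pi_mulVec Q (heicont i)))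
    · exact contOn_dot hu (contOn_pi_mulVec R hu)
  -- nonnegativity
  have haij_nonneg : ∀ i j, 0 ≤ a i j := by
    intro i j; rcases h01 i j with h | h <;> rw [h] <;> norm_num
  have hg_nonneg : ∀ i, 0 ≤ g i := by
    intro i; rcases hg01 i with h | h <;> rw [h] <;> norm_num
  have hJnonneg : ∀ (i : Fin N) (t : ℝ), 0 ≤ Jint a g Q R K e i t := by
    intro i t
    refine add_nonneg (add_nonneg ?_ ?_) ?_
    · refine mul_nonneg (by norm_num) (Finset.sum_nonneg fun j _ => ?_)
      exact mul_nonneg (haij_nonneg i j) (posdef_dot_nonneg hQ _)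
    · exact mul_nonneg (hg_nonneg i) (posdef_dot_nonneg hQ _)
    · exact posdef_dot_nonneg hR _
  -- integrability of the tracking cost
  have hJhat_int : IntegrableOn (fun t => ∑ i, (lam i * (εt i t ⬝ᵥ Q.mulVec (εt i t))
      + lam i ^ 2 * (εt i t ⬝ᵥ (Kᵀ * R * K).mulVec (εt i t)))) (Set.Ioi 0) :=
    integrable_finset_sum _ fun i _ => hIntAux i
  have hJsum_int : IntegrableOn (fun t => ∑ i, Jint a g Q R K e i t) (Set.Ioi 0) :=
    hJhat_int.congr_fun hptwise measurableSet_Ioi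
  have hJint_int : ∀ i : Fin N, IntegrableOn (fun t => Jint a g Q R K e i t) (Set.Ioi 0) := by
    intro i
    refine Integrable.mono hJsum_int
      (((hJcont i).mono Set.Ioi_subset_Ici_self).aestronglyMeasurable measurableSet_Ioi) ?_
    refine Filter.Eventually.of_forall fun t => ?_
    rw [Real.norm_eq_abs, Real.norm_eq_abs, abs_of_nonneg (hJnonneg i t),
      abs_of_nonneg (Finset.sum_nonneg fun j _ => hJnonneg j t)]
    exact Finset.single_le_sum (fun j _ => hJnonneg j t) (Finset.mem_univ i)
  -- final assembly
  have hsumint : (∑ i, ∫ t in Set.Ioi (0:ℝ), Jint a g Q R K e i t) < c := by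
    have h1 : (∑ i, ∫ t in Set.Ioi (0:ℝ), Jint a g Q R K e i t)
        = ∫ t in Set.Ioi (0:ℝ), ∑ i, Jint a g Q R K e i t :=
      (integral_finset_sum _ fun i _ => hJint_int i).symm
    have h2 : (∫ t in Set.Ioi (0:ℝ), ∑ i, Jint a g Q R K e i t)
        = ∫ t in Set.Ioi (0:ℝ), ∑ i, (lam i * (εt i t ⬝ᵥ Q.mulVec (εt i t))
            + lam i ^ 2 * (εt i t ⬝ᵥ (Kᵀ * R * K).mulVec (εt i t))) :=
      setIntegral_congr_fun measurableSet_Ioi (fun t ht => (hptwise t ht).symm)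
    have h3 : (∫ t in Set.Ioi (0:ℝ), ∑ i, (lam i * (εt i t ⬝ᵥ Q.mulVec (εt i t))
            + lam i ^ 2 * (εt i t ⬝ᵥ (Kᵀ * R * K).mulVec (εt i t))))
        = ∑ i, ∫ t in Set.Ioi (0:ℝ), (lam i * (εt i t ⬝ᵥ Q.mulVec (εt i t))
            + lam i ^ 2 * (εt i t ⬝ᵥ (Kᵀ * R * K).mulVec (εt i t))) :=
      integral_finset_sum _ fun i _ => hIntAux i
    rw [h1, h2, h3]
    exact hSumAux
  exact ⟨hJint_int, hsumint⟩
end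

section
/- If the simple undirected graph 𝒢 on nodes {1,…,N} is connected and at least one g_i equals 1 (i.e., G ≠ 0), then the symmetric matrix ℒ + G is positive definite; in particular all its eigenvalues are positive. -/
open Matrix

/-- If the simple undirected graph with 0–1 adjacency matrix `a` is
connected and at least one pinning gain `g i` equals 1, then the symmetric matrix
`ℒ + G` is positive definite (in particular all its eigenvalues are positive). -/
theorem stmt8_laplacian_plus_pinning_posdef
    (N : ℕ)
    (a : Fin N → Fin N → ℝ)
    (hsymm : ∀ i j, a i j = a j i)
    (hdiag : ∀ i, a i i = 0)
    (h01 : ∀ i j, a i j = 0 ∨ a i j = 1)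
    (hconn : ∀ i j : Fin N, Relation.ReflTransGen (fun u v => a u v = 1) i j)
    (g : Fin N → ℝ)
    (hg01 : ∀ i, g i = 0 ∨ g i = 1)
    (hgne : ∃ i, g i = 1)
    (L : Matrix (Fin N) (Fin N) ℝ)
    (hL : L = Matrix.diagonal (fun i => ∑ j, a i j) - Matrix.of a)
    (G : Matrix (Fin N) (Fin N) ℝ)
    (hG : G = Matrix.diagonal g) :
    (L + G).PosDef := by
  subst hL hG
  have ha0 : ∀ i j, 0 ≤ a i j := fun i j => by rcases h01 i j with h | h <;> simp [h]
  have hg0 : ∀ i, 0 ≤ g i := fun i => by rcases hg01 i with h | h <;> simp [h]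
  rw [Matrix.posDef_iff_dotProduct_mulVec]
  constructor
  · ext i j
    by_cases h : i = j
    · subst h
      simp [Matrix.conjTranspose_apply, Matrix.add_apply, Matrix.sub_apply,
        Matrix.diagonal_apply]
    · simp [Matrix.conjTranspose_apply, Matrix.add_apply, Matrix.sub_apply,
        Matrix.diagonal_apply, h, Ne.symm h, hsymm j i]
  · intro x hx
    have key : dotProduct (star x) ((Matrix.diagonal (fun i => ∑ j, a i j)
        - Matrix.of a + Matrix.diagonal g) *ᵥ x)
        = (∑ i, ∑ j, a i j * (x i - x j) ^ 2) / 2 + ∑ i, g i * x i ^ 2 := by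
      have hswap : ∑ i, ∑ j, a i j * x j ^ 2 = ∑ i, ∑ j, a i j * x i ^ 2 := by
        rw [Finset.sum_comm]
        exact Finset.sum_congr rfl fun i _ => Finset.sum_congr rfl fun j _ => by
          rw [hsymm]
      have hmv : ∀ i, ((Matrix.diagonal (fun i => ∑ j, a i j)
          - Matrix.of a + Matrix.diagonal g) *ᵥ x) i
          = (∑ j, a i j) * x i - (∑ j, a i j * x j) + g i * x i := by
        intro i
        simp only [Matrix.mulVec, dotProduct, Matrix.add_apply, Matrix.sub_apply,
          Matrix.diagonal_apply, Matrix.of_apply, sub_mul, add_mul, ite_mul, zero_mul,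
          Finset.sum_add_distrib, Finset.sum_sub_distrib, Finset.sum_ite_eq,
          Finset.mem_univ, if_true]
      simp only [dotProduct, star_trivial, hmv]
      have lhs_eq : ∑ i, x i * ((∑ j, a i j) * x i - (∑ j, a i j * x j) + g i * x i)
          = ((∑ i, ∑ j, a i j * x i ^ 2) - ∑ i, ∑ j, a i j * (x i * x j))
            + ∑ i, g i * x i ^ 2 := by
        rw [← Finset.sum_sub_distrib, ← Finset.sum_add_distrib]
        refine Finset.sum_congr rfl fun i _ => ?_
        have e1 : (∑ j, a i j * x i ^ 2) = (∑ j, a i j) * x i ^ 2 :=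
          (Finset.sum_mul _ _ _).symm
        have e2 : (∑ j, a i j * (x i * x j)) = x i * ∑ j, a i j * x j := by
          rw [Finset.mul_sum]
          exact Finset.sum_congr rfl fun j _ => by ring
        rw [e1, e2]
        ring
      rw [lhs_eq]
      have rhs_eq : ∑ i, ∑ j, a i j * (x i - x j) ^ 2
          = (∑ i, ∑ j, a i j * x i ^ 2) + (∑ i, ∑ j, a i j * x j ^ 2)
            - 2 * ∑ i, ∑ j, a i j * (x i * x j) := by
        rw [← Finset.sum_add_distrib, Finset.mul_sum, ← Finset.sum_sub_distrib]
        refine Finset.sum_congr rfl fun i _ => ?_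
        rw [← Finset.sum_add_distrib, Finset.mul_sum, ← Finset.sum_sub_distrib]
        refine Finset.sum_congr rfl fun j _ => by ring
      rw [rhs_eq, hswap]
      ring
    rw [key]
    have hQ0 : 0 ≤ ∑ i, ∑ j, a i j * (x i - x j) ^ 2 :=
      Finset.sum_nonneg fun i _ => Finset.sum_nonneg fun j _ =>
        mul_nonneg (ha0 i j) (sq_nonneg _)
    have hG0 : 0 ≤ ∑ i, g i * x i ^ 2 :=
      Finset.sum_nonneg fun i _ => mul_nonneg (hg0 i) (sq_nonneg _)
    rcases lt_or_eq_of_le (by positivity : (0:ℝ) ≤ (∑ i, ∑ j, a i j * (x i - x j) ^ 2) / 2 + ∑ i, g i * x i ^ 2) with h | h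
    · exact h
    exfalso
    -- h : 0 = Q/2 + S, both nonneg, so both zero
    have hQ : ∑ i, ∑ j, a i j * (x i - x j) ^ 2 = 0 := by
      nlinarith [hQ0, hG0]
    have hS : ∑ i, g i * x i ^ 2 = 0 := by nlinarith [hQ0, hG0]
    have hstep : ∀ i j, a i j = 1 → x i = x j := by
      intro i j hij
      have := (Finset.sum_eq_zero_iff_of_nonneg fun i _ =>
        Finset.sum_nonneg fun j _ => mul_nonneg (ha0 i j) (sq_nonneg _)).mp hQ i (Finset.mem_univ i)
      have := (Finset.sum_eq_zero_iff_of_nonneg fun j _ =>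
        mul_nonneg (ha0 i j) (sq_nonneg _)).mp this j (Finset.mem_univ j)
      rw [hij, one_mul] at this
      have := pow_eq_zero_iff (n := 2) (by norm_num) |>.mp this
      linarith [this]
    have hconst : ∀ i j : Fin N, x i = x j := by
      intro i j
      induction hconn i j with
      | refl => rfl
      | tail _ hbc ih => exact ih.trans (hstep _ _ hbc)
    obtain ⟨i0, hi0⟩ := hgne
    have hx0 : x i0 = 0 := by
      have := (Finset.sum_eq_zero_iff_of_nonneg fun i _ =>
        mul_nonneg (hg0 i) (sq_nonneg _)).mp hS i0 (Finset.mem_univ i0)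
      rw [hi0, one_mul] at this
      exact pow_eq_zero_iff (n := 2) (by norm_num) |>.mp this
    apply hx
    funext j
    rw [← hconst i0 j] at *
    simpa using hx0
end

section
/- Let Y = Y' > 0 in ℝ^{n×n}, K ∈ ℝ^{p×n}, Q = Q' > 0, R = R' > 0, and constants λ_i > 0, π_i > 0, θ_i > 0, p_i, q_i ∈ ℝ (i = 1,…,N, N ≥ 2), with θ̄_i = ∑_{j≠i} θ_j. Suppose that for every i the Riccati inequality holds with F = K Y: A Y + Y A' + (p_i²/π_i + q_i²/θ_i) B₂ B₂' + Y (λ_i Q + (π_i + θ̄_i) I) Y + λ_i² Y K' R K Y + λ_i Y K' B₁' + λ_i B₁ K Y < 0 (negative definite). Then for all vectors ε_1,…,ε_N ∈ ℝⁿ not all zero, all ξ_i ∈ ℝⁿ and all η_i ∈ ℝ^{(N−1)n} (i = 1,…,N): ∑_{i=1}^N [ ε_i' (Y^{-1}(A + λ_i B₁ K) + (A + λ_i B₁ K)' Y^{-1}) ε_i + 2 p_i ε_i' Y^{-1} B₂ ξ_i + 2 ε_i' Y^{-1} L_i η_i ] < ∑_{i=1}^N [ π_i (‖ξ_i‖²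 − ‖ε_i‖²) + θ_i (‖η_i‖² − ∑_{j≠i} ‖ε_j‖²) ] − ∑_{i=1}^N ε_i' (λ_i² K' R K + λ_i Q) ε_i, where L_i ∈ ℝ^{n×(N−1)n} is any matrix with L_i L_i' = q_i² B₂ B₂' (in particular L_i = B₂[f_{i,1}I,…,f_{i,i−1}I,f_{i,i+1}I,…,f_{i,N}I] with q_i² = ∑_{j≠i} f_{ij}²). -/
open Matrix

private lemma dot_shift {k m : Type*} [Fintype k] [Fintype m]
    (M : Matrix k m ℝ) (x : k → ℝ) (y : m → ℝ) :
    x ⬝ᵥ (M *ᵥ y) = (Mᵀ *ᵥ x) ⬝ᵥ y := by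
  rw [dotProduct_mulVec, mulVec_transpose]

private lemma quad_conj {n : ℕ} (S M : Matrix (Fin n) (Fin n) ℝ) (hSt : Sᵀ = S)
    (x : Fin n → ℝ) :
    x ⬝ᵥ ((S * M * S) *ᵥ x) = (S *ᵥ x) ⬝ᵥ (M *ᵥ (S *ᵥ x)) := by
  rw [← mulVec_mulVec, ← mulVec_mulVec, dot_shift, hSt]

private lemma csq {m : Type*} [Fintype m] (c t : ℝ) (ht : 0 < t) (u x : m → ℝ) :
    2 * c * (u ⬝ᵥ x) ≤ c ^ 2 / t * (u ⬝ᵥ u) + t * (x ⬝ᵥ x) := by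
  have h0 : (0:ℝ) ≤ (t • x - c • u) ⬝ᵥ (t • x - c • u) :=
    Finset.sum_nonneg fun i _ => mul_self_nonneg _
  have h1 : (t • x - c • u) ⬝ᵥ (t • x - c • u)
      = t^2 * (x ⬝ᵥ x) - 2*t*c*(u ⬝ᵥ x) + c^2 * (u ⬝ᵥ u) := by
    simp [sub_dotProduct, dotProduct_sub, smul_dotProduct, dotProduct_smul, smul_eq_mul,
      dotProduct_comm x u]
    ring
  rw [h1] at h0
  rw [← sub_nonneg]
  have h2 : c ^ 2 / t * (u ⬝ᵥ u) + t * (x ⬝ᵥ x) - 2 * c * (u ⬝ᵥ x)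
      = (t^2 * (x ⬝ᵥ x) - 2*t*c*(u ⬝ᵥ x) + c^2 * (u ⬝ᵥ u)) / t := by
    field_simp; ring
  rw [h2]; exact div_nonneg h0 ht.le

private lemma conj_identity {n p : ℕ}
    (A : Matrix (Fin n) (Fin n) ℝ) (B₁ : Matrix (Fin n) (Fin p) ℝ)
    (B₂ Y Q : Matrix (Fin n) (Fin n) ℝ) (K : Matrix (Fin p) (Fin n) ℝ)
    (R : Matrix (Fin p) (Fin p) ℝ) (l c w : ℝ)
    (hSY : Y⁻¹ * Y = 1) (hYS : Y * Y⁻¹ = 1) (hSt : Y⁻¹ᵀ = Y⁻¹) :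
    Y⁻¹ * (A * Y + Y * Aᵀ + c • (B₂ * B₂ᵀ)
        + Y * (l • Q + w • (1 : Matrix (Fin n) (Fin n) ℝ)) * Y
        + l ^ 2 • (Y * Kᵀ * R * K * Y)
        + l • (Y * Kᵀ * B₁ᵀ) + l • (B₁ * K * Y)) * Y⁻¹
    = (Y⁻¹ * (A + l • (B₁ * K)) + (A + l • (B₁ * K))ᵀ * Y⁻¹)
      + c • (Y⁻¹ * B₂ * (Y⁻¹ * B₂)ᵀ) + l • Q
      + w • (1 : Matrix (Fin n) (Fin n) ℝ) + l ^ 2 • (Kᵀ * R * K) := by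
  have k1 : ∀ M : Matrix (Fin n) (Fin n) ℝ, Y⁻¹ * (Y * M) = M := fun M => by
    rw [← Matrix.mul_assoc, hSY, Matrix.one_mul]
  have k2 : ∀ M : Matrix (Fin n) (Fin n) ℝ, Y * (Y⁻¹ * M) = M := fun M => by
    rw [← Matrix.mul_assoc, hYS, Matrix.one_mul]
  have k1p : ∀ M : Matrix (Fin n) (Fin p) ℝ, Y⁻¹ * (Y * M) = M := fun M => by
    rw [← Matrix.mul_assoc, hSY, Matrix.one_mul]
  simp only [Matrix.mul_add, Matrix.add_mul, Matrix.smul_mul, Matrix.mul_smul,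
    Matrix.transpose_add, Matrix.transpose_smul, Matrix.transpose_mul,
    Matrix.transpose_transpose, hSt, Matrix.mul_one, Matrix.one_mul,
    Matrix.mul_assoc, k1, k2, k1p, hSY, hYS]
  abel

set_option maxHeartbeats 1600000 in
/-- The algebraic dissipation inequality behind the Lyapunov argument of
Theorem 1: if the Riccati inequalities (with `F = KY`) hold for every `i`, then for all
vectors `ε_i` (not all zero), `ξ_i`, `η_i`,
`∑ᵢ [ εᵢ'(Y⁻¹(A+λᵢB₁K) + (A+λᵢB₁K)'Y⁻¹)εᵢ + 2pᵢ εᵢ'Y⁻¹B₂ξᵢ + 2εᵢ'Y⁻¹Lᵢηᵢ ]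
 < ∑ᵢ [ πᵢ(‖ξᵢ‖²-‖εᵢ‖²) + θᵢ(‖ηᵢ‖² - ∑_{j≠i}‖εⱼ‖²) ] - ∑ᵢ εᵢ'(λᵢ²K'RK + λᵢQ)εᵢ`,
where `Lᵢ` is any matrix with `LᵢLᵢ' = qᵢ² B₂B₂'`. -/
theorem stmt10_dissipation_inequality
    (n p N : ℕ) (hN : 2 ≤ N)
    (A : Matrix (Fin n) (Fin n) ℝ)
    (B₁ : Matrix (Fin n) (Fin p) ℝ)
    (B₂ : Matrix (Fin n) (Fin n) ℝ)
    (Y : Matrix (Fin n) (Fin n) ℝ) (hY : Y.PosDef)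
    (K : Matrix (Fin p) (Fin n) ℝ)
    (Q : Matrix (Fin n) (Fin n) ℝ) (hQ : Q.PosDef)
    (R : Matrix (Fin p) (Fin p) ℝ) (hR : R.PosDef)
    (lam πc θc : Fin N → ℝ)
    (hlam : ∀ i, 0 < lam i) (hπ : ∀ i, 0 < πc i) (hθ : ∀ i, 0 < θc i)
    (pc qc : Fin N → ℝ)
    (Li : (i : Fin N) → Matrix (Fin n) ({j : Fin N // j ≠ i} × Fin n) ℝ)
    (hLi : ∀ i, Li i * (Li i)ᵀ = (qc i) ^ 2 • (B₂ * B₂ᵀ))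
    (hRiccati : ∀ i,
      (-(A * Y + Y * Aᵀ + ((pc i) ^ 2 / πc i + (qc i) ^ 2 / θc i) • (B₂ * B₂ᵀ)
        + Y * (lam i • Q + (πc i + ∑ j ∈ Finset.univ.erase i, θc j) •
            (1 : Matrix (Fin n) (Fin n) ℝ)) * Y
        + (lam i) ^ 2 • (Y * Kᵀ * R * K * Y)
        + lam i • (Y * Kᵀ * B₁ᵀ) + lam i • (B₁ * K * Y))).PosDef)
    (ε ξ : Fin N → Fin n → ℝ)
    (hεne : ∃ i, ε i ≠ 0)
    (η : (i : Fin N) → {j : Fin N // j ≠ i} × Fin n → ℝ) :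
    ∑ i, (ε i ⬝ᵥ ((Y⁻¹ * (A + lam i • (B₁ * K))
            + (A + lam i • (B₁ * K))ᵀ * Y⁻¹).mulVec (ε i))
        + 2 * pc i * (ε i ⬝ᵥ (Y⁻¹ * B₂).mulVec (ξ i))
        + 2 * (ε i ⬝ᵥ (Y⁻¹ * Li i).mulVec (η i)))
      < ∑ i, (πc i * (ξ i ⬝ᵥ ξ i - ε i ⬝ᵥ ε i)
          + θc i * (η i ⬝ᵥ η i - ∑ j ∈ Finset.univ.erase i, ε j ⬝ᵥ ε j))
        - ∑ i, ε i ⬝ᵥ (((lam i) ^ 2 • (Kᵀ * R * K) + lam i • Q).mulVec (ε i)) := by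
  classical
  have hYd : IsUnit Y.det := isUnit_iff_ne_zero.mpr hY.det_pos.ne'
  have hSY : Y⁻¹ * Y = 1 := Matrix.nonsing_inv_mul Y hYd
  have hYS : Y * Y⁻¹ = 1 := Matrix.mul_nonsing_inv Y hYd
  have hYt : Yᵀ = Y := by
    have h := hY.1.eq
    rwa [Matrix.conjTranspose_eq_transpose_of_trivial] at h
  have hSt : Y⁻¹ᵀ = Y⁻¹ := by
    rw [Matrix.transpose_nonsing_inv, hYt]
  set θb : Fin N → ℝ := fun i => ∑ j ∈ Finset.univ.erase i, θc j with hθb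
  -- the strict quadratic terms
  set g : Fin N → ℝ := fun i => (Y⁻¹ *ᵥ ε i) ⬝ᵥ
      ((-(A * Y + Y * Aᵀ + ((pc i) ^ 2 / πc i + (qc i) ^ 2 / θc i) • (B₂ * B₂ᵀ)
        + Y * (lam i • Q + (πc i + θb i) •
            (1 : Matrix (Fin n) (Fin n) ℝ)) * Y
        + (lam i) ^ 2 • (Y * Kᵀ * R * K * Y)
        + lam i • (Y * Kᵀ * B₁ᵀ) + lam i • (B₁ * K * Y))) *ᵥ (Y⁻¹ *ᵥ ε i)) with hg
  have hg0 : ∀ i, 0 ≤ g i := by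
    intro i
    rw [hg]
    simpa only [star_trivial] using (hRiccati i).posSemidef.dotProduct_mulVec_nonneg (Y⁻¹ *ᵥ ε i)
  have hinj : ∀ x : Fin n → ℝ, x ≠ 0 → Y⁻¹ *ᵥ x ≠ 0 := by
    intro x hx h
    apply hx
    have h2 : Y *ᵥ (Y⁻¹ *ᵥ x) = x := by rw [mulVec_mulVec, hYS, one_mulVec]
    rw [h, mulVec_zero] at h2
    exact h2.symm
  have hgpos : 0 < ∑ i, g i := by
    obtain ⟨i0, hi0⟩ := hεne
    refine Finset.sum_pos' (fun i _ => hg0 i) ⟨i0, Finset.mem_univ _, ?_⟩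
    rw [hg]
    simpa only [star_trivial] using (hRiccati i0).dotProduct_mulVec_pos (x := Y⁻¹ *ᵥ ε i0) (hinj _ hi0)
  -- per-index key inequality
  have key : ∀ i,
      ε i ⬝ᵥ ((Y⁻¹ * (A + lam i • (B₁ * K))
            + (A + lam i • (B₁ * K))ᵀ * Y⁻¹) *ᵥ (ε i))
        + 2 * pc i * (ε i ⬝ᵥ ((Y⁻¹ * B₂) *ᵥ (ξ i)))
        + 2 * (ε i ⬝ᵥ ((Y⁻¹ * Li i) *ᵥ (η i)))
      ≤ (πc i * (ξ i ⬝ᵥ ξ i - ε i ⬝ᵥ ε i)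
          + θc i * (η i ⬝ᵥ η i) - θb i * (ε i ⬝ᵥ ε i)
          - ε i ⬝ᵥ (((lam i) ^ 2 • (Kᵀ * R * K) + lam i • Q) *ᵥ (ε i))) - g i := by
    intro i
    set k : ℝ := ε i ⬝ᵥ ((Y⁻¹ * B₂ * (Y⁻¹ * B₂)ᵀ) *ᵥ ε i) with hk
    set u : Fin n → ℝ := (Y⁻¹ * B₂)ᵀ *ᵥ ε i with hu
    set v : {j : Fin N // j ≠ i} × Fin n → ℝ := (Y⁻¹ * Li i)ᵀ *ᵥ ε i with hv
    have e1 : ε i ⬝ᵥ ((Y⁻¹ * B₂) *ᵥ ξ i) = u ⬝ᵥ ξ i := dot_shift _ _ _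
    have e2 : ε i ⬝ᵥ ((Y⁻¹ * Li i) *ᵥ η i) = v ⬝ᵥ η i := dot_shift _ _ _
    have e3 : u ⬝ᵥ u = k := by
      rw [hu, hk, ← dot_shift, mulVec_mulVec]
    have e4 : (Y⁻¹ * Li i) * (Y⁻¹ * Li i)ᵀ = qc i ^ 2 • (Y⁻¹ * B₂ * (Y⁻¹ * B₂)ᵀ) := by
      have hLi' : Li i * ((Li i)ᵀ * Y⁻¹) = qc i ^ 2 • (B₂ * (B₂ᵀ * Y⁻¹)) := by
        rw [← Matrix.mul_assoc, hLi i, Matrix.smul_mul, Matrix.mul_assoc]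
      simp only [Matrix.transpose_mul, hSt, Matrix.mul_assoc, hLi', Matrix.mul_smul]
    have e5 : v ⬝ᵥ v = qc i ^ 2 * k := by
      rw [hv, hk, ← dot_shift, mulVec_mulVec, e4, smul_mulVec, dotProduct_smul,
        smul_eq_mul]
    have h1 := csq (pc i) (πc i) (hπ i) u (ξ i)
    have h2 := csq 1 (θc i) (hθ i) v (η i)
    rw [e3] at h1
    rw [e5] at h2
    have hmid := conj_identity A B₁ B₂ Y Q K R (lam i)
      ((pc i) ^ 2 / πc i + (qc i) ^ 2 / θc i) (πc i + θb i) hSY hYS hSt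
    have hgq : g i = -(ε i ⬝ᵥ ((Y⁻¹ * (A + lam i • (B₁ * K))
            + (A + lam i • (B₁ * K))ᵀ * Y⁻¹) *ᵥ (ε i))
        + ((pc i) ^ 2 / πc i + (qc i) ^ 2 / θc i) * k
        + lam i * (ε i ⬝ᵥ (Q *ᵥ ε i)) + (πc i + θb i) * (ε i ⬝ᵥ ε i)
        + lam i ^ 2 * (ε i ⬝ᵥ ((Kᵀ * R * K) *ᵥ ε i))) := by
      rw [hg]
      simp only []
      rw [← quad_conj Y⁻¹ _ hSt, Matrix.mul_neg, Matrix.neg_mul, hmid, hk]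
      simp only [Matrix.add_mulVec, Matrix.smul_mulVec, dotProduct_add,
        dotProduct_smul, Matrix.one_mulVec, smul_eq_mul, dotProduct_neg, neg_mulVec]
      try ring
    have hexp : ε i ⬝ᵥ (((lam i) ^ 2 • (Kᵀ * R * K) + lam i • Q) *ᵥ (ε i))
        = lam i ^ 2 * (ε i ⬝ᵥ ((Kᵀ * R * K) *ᵥ ε i)) + lam i * (ε i ⬝ᵥ (Q *ᵥ ε i)) := by
      simp [Matrix.add_mulVec, Matrix.smul_mulVec, dotProduct_add, dotProduct_smul,
        smul_eq_mul]
    have hc : (pc i) ^ 2 / πc i * k + 1 ^ 2 / θc i * (qc i ^ 2 * k)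
        = ((pc i) ^ 2 / πc i + (qc i) ^ 2 / θc i) * k := by
      field_simp
    rw [e1, e2, hexp]
    linarith [h1, h2, hc, hgq]
  -- sum swap identity
  have hswap : ∑ i, θc i * ∑ j ∈ Finset.univ.erase i, (ε j ⬝ᵥ ε j)
      = ∑ i, θb i * (ε i ⬝ᵥ ε i) := by
    simp_rw [Finset.mul_sum]
    rw [Finset.sum_comm' (s := Finset.univ) (t := fun x => Finset.univ.erase x)
      (t' := Finset.univ) (s' := fun y => Finset.univ.erase y)
      (fun x y => by simp [Finset.mem_erase, eq_comm])]
    simp_rw [hθb, Finset.sum_mul]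
  calc ∑ i, (ε i ⬝ᵥ ((Y⁻¹ * (A + lam i • (B₁ * K))
            + (A + lam i • (B₁ * K))ᵀ * Y⁻¹) *ᵥ (ε i))
        + 2 * pc i * (ε i ⬝ᵥ ((Y⁻¹ * B₂) *ᵥ (ξ i)))
        + 2 * (ε i ⬝ᵥ ((Y⁻¹ * Li i) *ᵥ (η i))))
      ≤ ∑ i, ((πc i * (ξ i ⬝ᵥ ξ i - ε i ⬝ᵥ ε i)
          + θc i * (η i ⬝ᵥ η i) - θb i * (ε i ⬝ᵥ ε i)
          - ε i ⬝ᵥ (((lam i) ^ 2 • (Kᵀ * R * K) + lam i • Q) *ᵥ (ε i))) - g i) :=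
        Finset.sum_le_sum (fun i _ => key i)
    _ = ∑ i, (πc i * (ξ i ⬝ᵥ ξ i - ε i ⬝ᵥ ε i)
          + θc i * (η i ⬝ᵥ η i) - θb i * (ε i ⬝ᵥ ε i)
          - ε i ⬝ᵥ (((lam i) ^ 2 • (Kᵀ * R * K) + lam i • Q) *ᵥ (ε i)))
          - ∑ i, g i := Finset.sum_sub_distrib _ _
    _ < ∑ i, (πc i * (ξ i ⬝ᵥ ξ i - ε i ⬝ᵥ ε i)
          + θc i * (η i ⬝ᵥ η i) - θb i * (ε i ⬝ᵥ ε i)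
          - ε i ⬝ᵥ (((lam i) ^ 2 • (Kᵀ * R * K) + lam i • Q) *ᵥ (ε i))) := by
        linarith [hgpos]
    _ = (∑ i, (πc i * (ξ i ⬝ᵥ ξ i - ε i ⬝ᵥ ε i) + θc i * (η i ⬝ᵥ η i)
          - ε i ⬝ᵥ (((lam i) ^ 2 • (Kᵀ * R * K) + lam i • Q) *ᵥ (ε i))))
          - ∑ i, θb i * (ε i ⬝ᵥ ε i) := by
        rw [← Finset.sum_sub_distrib]
        exact Finset.sum_congr rfl fun i _ => by ring
    _ = (∑ i, (πc i * (ξ i ⬝ᵥ ξ i - ε i ⬝ᵥ ε i) + θc i * (η i ⬝ᵥ η i)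
          - ε i ⬝ᵥ (((lam i) ^ 2 • (Kᵀ * R * K) + lam i • Q) *ᵥ (ε i))))
          - ∑ i, θc i * ∑ j ∈ Finset.univ.erase i, (ε j ⬝ᵥ ε j) := by rw [hswap]
    _ = ∑ i, (πc i * (ξ i ⬝ᵥ ξ i - ε i ⬝ᵥ ε i)
          + θc i * (η i ⬝ᵥ η i - ∑ j ∈ Finset.univ.erase i, ε j ⬝ᵥ ε j)
          - ε i ⬝ᵥ (((lam i) ^ 2 • (Kᵀ * R * K) + lam i • Q) *ᵥ (ε i))) := by
        rw [← Finset.sum_sub_distrib]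
        exact Finset.sum_congr rfl fun i _ => by ring
    _ = ∑ i, (πc i * (ξ i ⬝ᵥ ξ i - ε i ⬝ᵥ ε i)
          + θc i * (η i ⬝ᵥ η i - ∑ j ∈ Finset.univ.erase i, ε j ⬝ᵥ ε j))
        - ∑ i, ε i ⬝ᵥ (((lam i) ^ 2 • (Kᵀ * R * K) + lam i • Q) *ᵥ (ε i)) :=
        Finset.sum_sub_distrib _ _
end
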